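/- The successive-approximation series for the regular solution φ(k,x) of the matrix Schrödinger integral equation converges absolutely and uniformly: with M₀ = max over (i,j) of ∫_{−R}^{R}|V_{ij}|, the s-th iterate satisfies |φ_{ij}^{(s)}(k,x)| ≤ (sinh(2|Im k|R)/|Im k|)^s · cosh(2|Im k|R) · N^{s+2} M₀^s / s!, so Σ_s φ^{(s)}(k,x) converges for every complex k and x ∈ [−R,R]. -/

import Mathlib

open Matrix MeasureTheory

set_option maxHeartbeats 1000000

attribute [local instance] Matrix.normedAddCommGroup Matrix.normedSpace

/-- The entire function `t ↦ sin (k t) / k` (its value at `k = 0` is `t`). -/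
noncomputable def sinKern (k t : ℂ) : ℂ := if k = 0 then t else Complex.sin (k * t) / k

/-- Successive approximations for the regular solution `φ(k,x)` of the matrix
Schrödinger integral equation. -/
noncomputable def phiIter (N : ℕ) (V : ℝ → Matrix (Fin N) (Fin N) ℝ) (R : ℝ) (k : ℂ) :
    ℕ → ℝ → Matrix (Fin N) (Fin N) ℂ
  | 0 => fun x => Complex.cos (k * ((x : ℂ) + (R : ℂ))) • (1 : Matrix (Fin N) (Fin N) ℂ)
  | s + 1 => fun x =>
      ∫ t in (-R)..x,
        sinKern k ((x : ℂ) - (t : ℂ)) • ((V t).map Complex.ofReal * phiIter N V R k s t)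

lemma aux_abs_cos_le (z : ℂ) : ‖Complex.cos z‖ ≤ Real.cosh z.im := by
  have h2 : (‖Complex.cos z‖)^2 ≤ (Real.cosh z.im)^2 := by
    rw [Complex.sq_norm, Complex.cos_eq, ← Complex.ofReal_cos, ← Complex.ofReal_sin,
      ← Complex.ofReal_cosh, ← Complex.ofReal_sinh]
    simp only [Complex.normSq_apply, Complex.sub_re, Complex.ofReal_re, Complex.mul_re,
      Complex.I_re, Complex.I_im, Complex.ofReal_im, Complex.sub_im, Complex.mul_im]
    ring_nf
    nlinarith [Real.sin_sq_add_cos_sq z.re, Real.cosh_sq z.im,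
      sq_nonneg (Real.sin z.re * Real.sinh z.im), sq_nonneg (Real.sin z.re), Real.cosh_pos z.im]
  have h0 : (0:ℝ) ≤ Real.cosh z.im := (Real.cosh_pos z.im).le
  nlinarith [norm_nonneg (Complex.cos z)]

lemma aux_sinKern_eq (k : ℂ) (t : ℝ) :
    sinKern k t = ∫ s in (0:ℝ)..t, Complex.cos (k * s) := by
  by_cases hk : k = 0
  · simp [sinKern, hk]
  · have h : ∀ s : ℝ, HasDerivAt (fun u : ℝ => Complex.sin (k * u) / k) (Complex.cos (k * s)) s := by
      intro s
      have h1 : HasDerivAt (fun z : ℂ => Complex.sin (k * z) / k) (Complex.cos (k * s)) (s : ℂ) := by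
        have h2 : HasDerivAt (fun z : ℂ => k * z) k (s : ℂ) := by
          simpa using (hasDerivAt_id (s:ℂ)).const_mul k
        have h3 := ((Complex.hasDerivAt_sin (k * s)).comp (s:ℂ) h2).div_const k
        rw [mul_div_cancel_right₀ _ hk] at h3
        exact h3
      exact h1.comp_ofReal
    rw [intervalIntegral.integral_eq_sub_of_hasDerivAt (fun s _ => h s)
      ((Complex.continuous_cos.comp (by continuity)).intervalIntegrable _ _)]
    simp [sinKern, hk]

lemma aux_cosh_int_le {c R t : ℝ} (hc : 0 ≤ c) (ht0 : 0 ≤ t) (ht : t ≤ 2*R) (hR : 0 < R) :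
    (∫ s in (0:ℝ)..t, Real.cosh (c*s)) ≤ t/(2*R) * ∫ s in (0:ℝ)..(2*R), Real.cosh (c*s) := by
  rcases eq_or_lt_of_le ht0 with h0 | h0
  · simp [← h0]
  · have h2R : (0:ℝ) < 2*R := by linarith
    have hA : (2*R/t) ≠ 0 := ne_of_gt (div_pos h2R h0)
    have hmono : (∫ s in (0:ℝ)..t, Real.cosh (c*s)) ≤ ∫ s in (0:ℝ)..t, Real.cosh (c*(2*R/t*s)) := by
      apply intervalIntegral.integral_mono_on h0.le
        ((Real.continuous_cosh.comp (by continuity)).intervalIntegrable _ _)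
        ((Real.continuous_cosh.comp (by continuity)).intervalIntegrable _ _)
      intro s hs
      apply Real.cosh_le_cosh.2
      have hs0 : 0 ≤ s := hs.1
      have h1 : (1:ℝ) ≤ 2*R/t := (one_le_div h0).2 ht
      have h2 : 0 ≤ c*s*(2*R/t-1) := mul_nonneg (mul_nonneg hc hs0) (sub_nonneg.2 h1)
      have : c*s ≤ c*(2*R/t*s) := by nlinarith [h2]
      rw [abs_of_nonneg (by positivity), abs_of_nonneg (by positivity)]
      exact this
    have hsub : (∫ s in (0:ℝ)..t, Real.cosh (c*(2*R/t*s)))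
        = (t/(2*R)) * ∫ s in (0:ℝ)..(2*R), Real.cosh (c*s) := by
      rw [intervalIntegral.integral_comp_mul_left (fun y => Real.cosh (c*y)) hA]
      rw [mul_zero]
      have : 2*R/t*t = 2*R := by field_simp
      rw [this, smul_eq_mul]
      congr 1
      rw [← one_div, one_div_div]
    linarith [hmono, hsub.le, hsub.ge]

lemma aux_ratio_int (k : ℂ) (R : ℝ) :
    (∫ s in (0:ℝ)..(2*R), Real.cosh (|k.im| * s))
      = if k.im = 0 then 2*R else Real.sinh (2 * |k.im| * R) / |k.im| := by
  by_cases h : k.im = 0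
  · simp [h]
  · have hc : |k.im| ≠ 0 := by simpa using h
    have hd : ∀ s:ℝ, HasDerivAt (fun u => Real.sinh (|k.im| * u) / |k.im|)
        (Real.cosh (|k.im| * s)) s := by
      intro s
      have h2 : HasDerivAt (fun u : ℝ => |k.im| * u) |k.im| s := by
        simpa using (hasDerivAt_id s).const_mul |k.im|
      have h3 := ((Real.hasDerivAt_sinh (|k.im| * s)).comp s h2).div_const |k.im|
      rw [mul_div_cancel_right₀ _ hc] at h3
      exact h3
    rw [intervalIntegral.integral_eq_sub_of_hasDerivAt (fun s _ => hd s)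
      ((Real.continuous_cosh.comp (by continuity)).intervalIntegrable _ _)]
    simp [h]
    ring_nf

lemma aux_pow_ineq {a b : ℝ} (hb : 0 ≤ b) (hba : b ≤ a) (s : ℕ) :
    (a - b) * b^s * (s+1 : ℝ) ≤ a^(s+1) := by
  have hgeom := geom_sum₂_mul a b (s+1)
  have key : (s+1 : ℝ) * b^s ≤ ∑ i ∈ Finset.range (s+1), a^i * b^(s+1-1-i) := by
    have hterm : ∀ i ∈ Finset.range (s+1), b^s ≤ a^i * b^(s+1-1-i) := by
      intro i hi
      have hi' : i ≤ s := Nat.lt_succ_iff.1 (Finset.mem_range.1 hi)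
      have h1 : b^s = b^i * b^(s+1-1-i) := by rw [← pow_add]; congr 1; omega
      rw [h1]
      exact mul_le_mul_of_nonneg_right (pow_le_pow_left₀ hb hba i) (pow_nonneg hb _)
    calc (s+1:ℝ) * b^s = ∑ _i ∈ Finset.range (s+1), b^s := by
          rw [Finset.sum_const, Finset.card_range]; push_cast; ring
      _ ≤ _ := Finset.sum_le_sum hterm
  nlinarith [pow_nonneg hb (s+1), mul_le_mul_of_nonneg_right key (sub_nonneg.2 hba),
    pow_nonneg hb s]

noncomputable def entryCLM (N : ℕ) (i j : Fin N) : Matrix (Fin N) (Fin N) ℂ →L[ℂ] ℂ :=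
  (ContinuousLinearMap.proj j).comp
    (ContinuousLinearMap.proj (R := ℂ) (φ := fun _ : Fin N => Fin N → ℂ) i)

lemma matrix_intervalIntegral_apply {N : ℕ} {F : ℝ → Matrix (Fin N) (Fin N) ℂ} {a b : ℝ}
    (hF : @IntervalIntegrable _ _ NormedAddCommGroup.toENormedAddCommMonoid.toENormedAddMonoid F MeasureTheory.volume a b) (i j : Fin N) :
    (∫ t in a..b, F t) i j = ∫ t in a..b, F t i j :=
  ((entryCLM N i j).intervalIntegral_comp_comm hF).symm

lemma matrix_intervalIntegrable_apply {N : ℕ} {F : ℝ → Matrix (Fin N) (Fin N) ℂ} {a b : ℝ}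
    (hF : @IntervalIntegrable _ _ NormedAddCommGroup.toENormedAddCommMonoid.toENormedAddMonoid F MeasureTheory.volume a b) (i j : Fin N) :
    IntervalIntegrable (fun t => F t i j) MeasureTheory.volume a b :=
  ⟨(entryCLM N i j).integrable_comp hF.1, (entryCLM N i j).integrable_comp hF.2⟩

lemma aux_kernel_le (k : ℂ) {t R : ℝ} (ht0 : 0 ≤ t) (ht : t ≤ 2*R) (hR : 0 < R) :
    ‖sinKern k t‖ ≤ (∫ s in (0:ℝ)..(2*R), Real.cosh (|k.im| * s)) * (t/(2*R)) := by
  have h1 : ‖sinKern k t‖ ≤ ∫ s in (0:ℝ)..t, Real.cosh (|k.im| * s) := by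
    rw [aux_sinKern_eq]
    calc ‖∫ s in (0:ℝ)..t, Complex.cos (k*s)‖
        ≤ ∫ s in (0:ℝ)..t, ‖Complex.cos (k*s)‖ :=
          intervalIntegral.norm_integral_le_integral_norm ht0
      _ ≤ ∫ s in (0:ℝ)..t, Real.cosh (|k.im| * s) := by
          apply intervalIntegral.integral_mono_on ht0
            (Continuous.intervalIntegrable (by fun_prop) _ _)
            (Continuous.intervalIntegrable (by fun_prop) _ _)
          intro s hs
          have hle := aux_abs_cos_le (k * s)
          have him : (k * (s:ℂ)).im = k.im * s := by simp [Complex.mul_im]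
          rw [him] at hle
          refine hle.trans (le_of_eq ?_)
          rw [← Real.cosh_abs (k.im * s), abs_mul, abs_of_nonneg hs.1]
  refine h1.trans ?_
  have h2 := aux_cosh_int_le (abs_nonneg k.im) ht0 ht hR
  linarith [h2]

theorem stmt_19 (N : ℕ) (V : ℝ → Matrix (Fin N) (Fin N) ℝ) (R : ℝ) (hR : 0 ≤ R)
    (hInt : ∀ i j, MeasureTheory.IntegrableOn (fun x => |V x i j|) (Set.Icc (-R) R))
    (M₀ : ℝ) (hM₀ : ∀ i j, (∫ x in (-R)..R, |V x i j|) ≤ M₀)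
    (k : ℂ) (ratio : ℝ)
    (hratio : ratio = if k.im = 0 then 2 * R else Real.sinh (2 * |k.im| * R) / |k.im|) :
    ∀ x ∈ Set.Icc (-R) R,
      (∀ s : ℕ, ∀ i j, ‖phiIter N V R k s x i j‖ ≤
        ratio ^ s * Real.cosh (2 * |k.im| * R) * (N : ℝ) ^ (s + 2) * M₀ ^ s / s.factorial) ∧
      Summable (fun s : ℕ => phiIter N V R k s x) := by
  intro x hx
  rcases Nat.eq_zero_or_pos N with hN0 | hNpos
  · subst hN0
    constructor
    · intro s i j; exact i.elim0
    · have hall : ∀ s : ℕ, phiIter 0 V R k s x = 0 := fun s => Subsingleton.elim _ _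
      simpa [funext hall] using summable_zero
  have hN1 : (1:ℝ) ≤ (N:ℝ) := by exact_mod_cast hNpos
  have hi0 : Fin N := ⟨0, hNpos⟩
  have hM0 : 0 ≤ M₀ :=
    le_trans (intervalIntegral.integral_nonneg (by linarith : -R ≤ R)
      (fun t _ => abs_nonneg _)) (hM₀ hi0 hi0)
  have hratio0 : 0 ≤ ratio := by
    rw [hratio]; split_ifs with h
    · linarith
    · exact div_nonneg (Real.sinh_nonneg_iff.2 (by positivity)) (abs_nonneg _)
  have hch0 : (0:ℝ) ≤ Real.cosh (2 * |k.im| * R) := (Real.cosh_pos _).le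
  have hrNM0 : 0 ≤ ratio * (N:ℝ) * M₀ :=
    mul_nonneg (mul_nonneg hratio0 (Nat.cast_nonneg N)) hM0
  have hrhs0 : ∀ s : ℕ,
      0 ≤ ratio ^ s * Real.cosh (2 * |k.im| * R) * (N:ℝ) ^ (s+2) * M₀ ^ s / (s.factorial : ℝ) :=
    fun s => div_nonneg (mul_nonneg (mul_nonneg (mul_nonneg (pow_nonneg hratio0 s) hch0)
      (pow_nonneg (Nat.cast_nonneg N) _)) (pow_nonneg hM0 s)) (Nat.cast_nonneg _)
  rcases hR.eq_or_lt with hR0 | hR0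
  · -- R = 0
    have hRz : R = 0 := hR0.symm
    subst hRz
    have hx0 : x = 0 := le_antisymm (by simpa using hx.2) (by simpa using hx.1)
    subst hx0
    have hzero : ∀ s : ℕ, phiIter N V 0 k (s+1) 0 = 0 := by
      intro s; simp [phiIter]
    constructor
    · intro s i j
      match s with
      | 0 =>
        have h0 : phiIter N V 0 k 0 0 i j = if i = j then 1 else 0 := by
          simp [phiIter, Matrix.smul_apply, Matrix.one_apply]
        rw [h0]
        split_ifs with hij
        · norm_num
          exact hNpos
        · simpa using hrhs0 0
      | s+1 =>
        rw [hzero s]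
        simpa using hrhs0 (s+1)
    · apply summable_of_ne_finset_zero (s := {0})
      intro b hb
      match b with
      | 0 => simp at hb
      | s+1 => exact hzero s
  -- R > 0
  set ch := Real.cosh (2 * |k.im| * R) with hch
  have hIV : ∀ (y : ℝ), -R ≤ y → y ≤ R → ∀ a b : Fin N,
      IntervalIntegrable (fun t => |V t a b|) MeasureTheory.volume (-R) y := by
    intro y h1 h2 a b
    rw [intervalIntegrable_iff]
    apply (hInt a b).mono_set
    rw [Set.uIoc_of_le h1]
    exact Set.Ioc_subset_Icc_self.trans (Set.Icc_subset_Icc le_rfl h2)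
  have hratioint : ratio = ∫ u in (0:ℝ)..(2*R), Real.cosh (|k.im| * u) := by
    rw [aux_ratio_int k R, ← hratio]
  have key : ∀ s : ℕ, ∀ y ∈ Set.Icc (-R) R, ∀ i j,
      ‖phiIter N V R k s y i j‖ ≤
        ch * (ratio * (N:ℝ) * M₀)^s * ((y+R)/(2*R))^s / (s.factorial : ℝ) := by
    intro s
    induction s with
    | zero =>
      intro y hy i j
      have h0 : phiIter N V R k 0 y i j
          = if i = j then Complex.cos (k * ((y:ℂ) + (R:ℂ))) else 0 := by
        simp [phiIter, Matrix.smul_apply, Matrix.one_apply]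
      rw [h0]
      simp only [pow_zero, mul_one, Nat.factorial_zero, Nat.cast_one, div_one]
      split_ifs with hij
      · have h1 := aux_abs_cos_le (k * ((y:ℂ) + (R:ℂ)))
        have him : (k * ((y:ℂ) + (R:ℂ))).im = k.im * (y + R) := by
          simp [Complex.mul_im, Complex.add_im, Complex.add_re]
        rw [him] at h1
        refine h1.trans ?_
        rw [hch]
        apply Real.cosh_le_cosh.2
        rw [abs_mul]
        have hyR : 0 ≤ y + R := by linarith [hy.1]
        rw [abs_of_nonneg hyR, abs_of_nonneg (by positivity : (0:ℝ) ≤ 2 * |k.im| * R)]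
        nlinarith [abs_nonneg k.im, hy.2]
      · simpa using hch0
    | succ s ih =>
      intro y hy i j
      have hy1 : -R ≤ y := hy.1
      have hy2 : y ≤ R := hy.2
      have hqy0 : 0 ≤ (y+R)/(2*R) := div_nonneg (by linarith) (by linarith)
      set D := ch * (ratio * (N:ℝ) * M₀)^s with hD
      have hD0 : 0 ≤ D := mul_nonneg hch0 (pow_nonneg hrNM0 s)
      set f : ℝ → Matrix (Fin N) (Fin N) ℂ := fun t =>
        sinKern k ((y:ℂ) - (t:ℂ)) • ((V t).map Complex.ofReal * phiIter N V R k s t) with hf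
      have hphi : phiIter N V R k (s+1) y = ∫ t in (-R)..y, f t := rfl
      set C : ℝ := ratio * D * ((y+R)/(2*R))^(s+1) / ((s+1).factorial : ℝ) with hC
      have hC0 : 0 ≤ C := div_nonneg (mul_nonneg (mul_nonneg hratio0 hD0)
        (pow_nonneg hqy0 _)) (Nat.cast_nonneg _)
      have hCgoal : C * ((N:ℝ) * M₀)
          = ch * (ratio * (N:ℝ) * M₀)^(s+1) * ((y+R)/(2*R))^(s+1) / ((s+1).factorial : ℝ) := by
        rw [hC, hD, pow_succ]
        ring
      by_cases hI : @IntervalIntegrable _ _ NormedAddCommGroup.toENormedAddCommMonoid.toENormedAddMonoid f MeasureTheory.volume (-R) y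
      · -- integrable case
        have hpt : ∀ t ∈ Set.Icc (-R) y, ‖f t i j‖ ≤ C * ∑ l, |V t i l| := by
          intro t ht
          have ht1 : -R ≤ t := ht.1
          have ht2 : t ≤ y := ht.2
          have hqt0 : 0 ≤ (t+R)/(2*R) := div_nonneg (by linarith) (by linarith)
          have hqtqy : (t+R)/(2*R) ≤ (y+R)/(2*R) := by gcongr <;> linarith
          have hfij : f t i j = sinKern k ((y:ℂ) - (t:ℂ))
              * ∑ l, ((V t i l : ℂ) * phiIter N V R k s t l j) := by
            simp [hf, Matrix.smul_apply, Matrix.mul_apply, Matrix.map_apply, smul_eq_mul,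
              Finset.mul_sum]
          rw [hfij, norm_mul]
          have hker : ‖sinKern k ((y:ℂ) - (t:ℂ))‖ ≤ ratio * ((y-t)/(2*R)) := by
            have hcast : (y:ℂ) - (t:ℂ) = ((y - t : ℝ) : ℂ) := by push_cast; ring
            rw [hcast]
            have h1 := aux_kernel_le k (t := y - t) (R := R) (by linarith) (by linarith) hR0
            rw [← hratioint] at h1
            exact h1
          have hsum : ‖∑ l, ((V t i l : ℂ) * phiIter N V R k s t l j)‖
              ≤ (D * ((t+R)/(2*R))^s / (s.factorial : ℝ)) * ∑ l, |V t i l| := by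
            refine (norm_sum_le _ _).trans ?_
            rw [Finset.mul_sum]
            apply Finset.sum_le_sum
            intro l _
            rw [norm_mul, Complex.norm_real, Real.norm_eq_abs,
              mul_comm (D * ((t+R)/(2*R))^s / (s.factorial : ℝ)) _]
            apply mul_le_mul_of_nonneg_left ?_ (abs_nonneg _)
            exact ih t ⟨ht1, ht2.trans hy2⟩ l j
          have hsum0 : 0 ≤ ∑ l, |V t i l| := Finset.sum_nonneg (fun l _ => abs_nonneg _)
          have hmain : (ratio * ((y-t)/(2*R))) * (D * ((t+R)/(2*R))^s / (s.factorial : ℝ)) ≤ C := by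
            have hyt : (y - t)/(2*R) = (y+R)/(2*R) - (t+R)/(2*R) := by ring
            have hkey := aux_pow_ineq hqt0 hqtqy s
            have hfact : ((s+1).factorial : ℝ) = ((s:ℝ)+1) * (s.factorial : ℝ) := by
              rw [Nat.factorial_succ]; push_cast; ring
            have hs1 : (0:ℝ) < (s:ℝ)+1 := by positivity
            have hsf : (0:ℝ) < (s.factorial : ℝ) := by exact_mod_cast s.factorial_pos
            have h2 : ((y+R)/(2*R) - (t+R)/(2*R)) * ((t+R)/(2*R))^s
                ≤ ((y+R)/(2*R))^(s+1) / ((s:ℝ)+1) := by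
              rw [le_div_iff₀ hs1]
              exact hkey
            calc (ratio * ((y-t)/(2*R))) * (D * ((t+R)/(2*R))^s / (s.factorial : ℝ))
                = (ratio * D / (s.factorial : ℝ))
                    * (((y+R)/(2*R) - (t+R)/(2*R)) * ((t+R)/(2*R))^s) := by rw [hyt]; ring
              _ ≤ (ratio * D / (s.factorial : ℝ)) * (((y+R)/(2*R))^(s+1) / ((s:ℝ)+1)) := by
                  apply mul_le_mul_of_nonneg_left h2
                  exact div_nonneg (mul_nonneg hratio0 hD0) hsf.le
              _ = C := by
                  rw [div_mul_div_comm, hC, hfact, mul_comm ((s:ℝ)+1) (s.factorial:ℝ)]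
          calc ‖sinKern k ((y:ℂ) - (t:ℂ))‖ * ‖∑ l, ((V t i l : ℂ) * phiIter N V R k s t l j)‖
              ≤ (ratio * ((y-t)/(2*R)))
                  * ((D * ((t+R)/(2*R))^s / (s.factorial : ℝ)) * ∑ l, |V t i l|) := by
                apply mul_le_mul hker hsum (norm_nonneg _)
                exact mul_nonneg hratio0 (div_nonneg (by linarith) (by linarith))
            _ = ((ratio * ((y-t)/(2*R))) * (D * ((t+R)/(2*R))^s / (s.factorial : ℝ)))
                  * ∑ l, |V t i l| := by ring
            _ ≤ C * ∑ l, |V t i l| := mul_le_mul_of_nonneg_right hmain hsum0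
        have hfij_int : IntervalIntegrable (fun t => f t i j) MeasureTheory.volume (-R) y :=
          matrix_intervalIntegrable_apply hI i j
        have hgint : IntervalIntegrable (fun t => C * ∑ l, |V t i l|)
            MeasureTheory.volume (-R) y := by
          apply IntervalIntegrable.const_mul
          have h1 : IntervalIntegrable (∑ l ∈ Finset.univ, fun t => |V t i l|)
              MeasureTheory.volume (-R) y :=
            IntervalIntegrable.sum Finset.univ (fun l _ => hIV y hy1 hy2 i l)
          have h2 : (∑ l ∈ Finset.univ, fun t => |V t i l|) = fun t => ∑ l, |V t i l| := by
            funext u; simp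
          rwa [h2] at h1
        calc ‖phiIter N V R k (s+1) y i j‖
            = ‖∫ t in (-R)..y, f t i j‖ := by
              rw [hphi, matrix_intervalIntegral_apply hI i j]
          _ ≤ ∫ t in (-R)..y, ‖f t i j‖ :=
              intervalIntegral.norm_integral_le_integral_norm hy1
          _ ≤ ∫ t in (-R)..y, C * ∑ l, |V t i l| :=
              intervalIntegral.integral_mono_on hy1 hfij_int.norm hgint hpt
          _ = C * ∑ l, ∫ t in (-R)..y, |V t i l| := by
              rw [intervalIntegral.integral_const_mul]
              congr 1
              exact intervalIntegral.integral_finset_sum (fun l _ => hIV y hy1 hy2 i l)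
          _ ≤ C * ((N:ℝ) * M₀) := by
              apply mul_le_mul_of_nonneg_left ?_ hC0
              calc ∑ l, ∫ t in (-R)..y, |V t i l|
                  ≤ ∑ _l : Fin N, M₀ := by
                    apply Finset.sum_le_sum
                    intro l _
                    refine le_trans ?_ (hM₀ i l)
                    apply intervalIntegral.integral_mono_interval le_rfl hy1 hy2
                      (Filter.Eventually.of_forall (fun t => abs_nonneg _))
                      (hIV R (by linarith) le_rfl i l)
                _ = (N:ℝ) * M₀ := by
                    rw [Finset.sum_const, Finset.card_univ, Fintype.card_fin, nsmul_eq_mul]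
          _ = ch * (ratio * (N:ℝ) * M₀)^(s+1) * ((y+R)/(2*R))^(s+1) / ((s+1).factorial : ℝ) :=
              hCgoal
      · -- non-integrable case
        rw [hphi, intervalIntegral.integral_undef hI]
        simp only [Matrix.zero_apply, norm_zero]
        exact div_nonneg (mul_nonneg (mul_nonneg hch0 (pow_nonneg hrNM0 (s+1)))
          (pow_nonneg hqy0 (s+1))) (Nat.cast_nonneg _)
  have hent : ∀ s : ℕ, ∀ i j, ‖phiIter N V R k s x i j‖ ≤
      ratio ^ s * ch * (N:ℝ)^(s+2) * M₀^s / (s.factorial : ℝ) := by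
    intro s i j
    refine (key s x hx i j).trans ?_
    have hqx0 : 0 ≤ (x+R)/(2*R) := div_nonneg (by linarith [hx.1]) (by linarith)
    have hq1 : ((x+R)/(2*R))^s ≤ 1 :=
      pow_le_one₀ hqx0 (by rw [div_le_one (by linarith)]; linarith [hx.2])
    have hN2 : (1:ℝ) ≤ (N:ℝ)^2 := one_le_pow₀ hN1
    have hsf : (0:ℝ) < (s.factorial : ℝ) := by exact_mod_cast s.factorial_pos
    have e1 : ratio ^ s * ch * (N:ℝ)^(s+2) * M₀^s = (ch * (ratio*(N:ℝ)*M₀)^s) * (N:ℝ)^2 := by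
      rw [pow_add, mul_pow, mul_pow]; ring
    rw [e1]
    rw [div_le_div_iff_of_pos_right hsf]
    have hX : 0 ≤ ch * (ratio*(N:ℝ)*M₀)^s := mul_nonneg hch0 (pow_nonneg hrNM0 s)
    nlinarith [mul_nonneg hX (sub_nonneg.2 hq1), mul_nonneg hX (sub_nonneg.2 hN2)]
  refine ⟨hent, ?_⟩
  refine Summable.of_norm_bounded
    (g := fun s => ratio ^ s * ch * (N:ℝ)^(s+2) * M₀^s / (s.factorial : ℝ)) ?_ ?_
  · have he : (fun s : ℕ => ratio ^ s * ch * (N:ℝ)^(s+2) * M₀^s / (s.factorial : ℝ))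
        = fun s => (ch * (N:ℝ)^2) * ((ratio*(N:ℝ)*M₀)^s / (s.factorial : ℝ)) := by
      funext s; rw [pow_add, mul_pow, mul_pow]; ring
    rw [he]
    exact (Real.summable_pow_div_factorial _).mul_left _
  · intro s
    rw [Matrix.norm_le_iff (hrhs0 s)]
    intro i j
    exact hent s i j
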